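/- Let R ≥ 1 be real, let w ∈ ℂ with |w| ≤ R, and let x be a real number with |x| ≤ 1/2. Then |(1+x)^w − 1 − w·x| ≤ |w|·x²·e^{2R}. -/

import Mathlib

open Complex

lemma my_abs_exp_sub_one_sub_id_le (z : ℂ) :
    ‖Complex.exp z - 1 - z‖ ≤
      ‖z‖ ^ 2 / 2 * Real.exp (‖z‖) := by
  have hs : Summable fun n : ℕ => z ^ n / (n.factorial : ℂ) :=
    NormedSpace.expSeries_div_summable z
  have hexp : Complex.exp z = ∑' n : ℕ, z ^ n / (n.factorial : ℂ) := by
    rw [Complex.exp_eq_exp_ℂ, NormedSpace.exp_eq_tsum_div]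
  have hsplit : Complex.exp z - 1 - z = ∑' n : ℕ, z ^ (n + 2) / (((n + 2).factorial : ℕ) : ℂ) := by
    have h := hs.sum_add_tsum_nat_add 2
    rw [hexp, ← h]
    simp [Finset.sum_range_succ]
    ring
  have hnorm : Summable fun n : ℕ => ‖z ^ (n + 2) / (((n + 2).factorial : ℕ) : ℂ)‖ := by
    have h := NormedSpace.norm_expSeries_div_summable z
    exact (summable_nat_add_iff 2).2 h
  have hfact : ∀ n : ℕ, ‖z ^ (n + 2) / (((n + 2).factorial : ℕ) : ℂ)‖ ≤
      ‖z‖ ^ 2 / 2 * (‖z‖ ^ n / (n.factorial : ℝ)) := by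
    intro n
    have h1 : (2 * n.factorial : ℕ) ≤ (n + 2).factorial := by
      have : (n + 2).factorial = (n + 2) * ((n + 1) * n.factorial) := by
        rw [Nat.factorial_succ, Nat.factorial_succ]
      rw [this, ← mul_assoc]
      have h2 : 2 ≤ (n + 2) * (n + 1) := Nat.mul_le_mul (show 2 ≤ n + 2 by omega) (show 1 ≤ n + 1 by omega)
      exact Nat.mul_le_mul_right _ h2
    have h1' : (2 * (n.factorial : ℝ)) ≤ ((n + 2).factorial : ℝ) := by exact_mod_cast h1
    have h2 : ‖z ^ (n + 2) / (((n + 2).factorial : ℕ) : ℂ)‖ =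
        ‖z‖ ^ (n + 2) / (((n + 2).factorial : ℕ) : ℝ) := by
      rw [norm_div, norm_pow]
      norm_num
    rw [h2]
    have h3 : ‖z‖ ^ 2 / 2 * (‖z‖ ^ n / (n.factorial : ℝ)) =
        ‖z‖ ^ (n + 2) / (2 * (n.factorial : ℝ)) := by
      rw [pow_add]; ring
    rw [h3]
    apply div_le_div_of_nonneg_left (by positivity) (by positivity) h1'
  have hRsum : Summable fun n : ℕ =>
      ‖z‖ ^ 2 / 2 * (‖z‖ ^ n / (n.factorial : ℝ)) :=
    (Real.summable_pow_div_factorial _).mul_left _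
  calc ‖Complex.exp z - 1 - z‖
      = ‖∑' n : ℕ, z ^ (n + 2) / (((n + 2).factorial : ℕ) : ℂ)‖ := by
        rw [hsplit]
    _ ≤ ∑' n : ℕ, ‖z ^ (n + 2) / (((n + 2).factorial : ℕ) : ℂ)‖ := norm_tsum_le_tsum_norm hnorm
    _ ≤ ∑' n : ℕ, ‖z‖ ^ 2 / 2 * (‖z‖ ^ n / (n.factorial : ℝ)) :=
        Summable.tsum_le_tsum hfact hnorm hRsum
    _ = ‖z‖ ^ 2 / 2 * ∑' n : ℕ, ‖z‖ ^ n / (n.factorial : ℝ) := tsum_mul_left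
    _ = ‖z‖ ^ 2 / 2 * Real.exp (‖z‖) := by
        rw [Real.exp_eq_exp_ℝ, NormedSpace.exp_eq_tsum_div]

lemma my_log_one_add_sub_le {x : ℝ} (hx : |x| ≤ 1 / 2) :
    |Real.log (1 + x) - x| ≤ 3 / 2 * x ^ 2 := by
  have hx1 : |(-x)| < 1 := by rw [abs_neg]; linarith [abs_nonneg x]
  have h := Real.abs_log_sub_add_sum_range_le hx1 2
  have hsum : (∑ i ∈ Finset.range 2, (-x) ^ (i + 1) / (i + 1)) = -x + x ^ 2 / 2 := by
    simp [Finset.sum_range_succ]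
    ring
  rw [hsum] at h
  have h2 : (1 : ℝ) - -x = 1 + x := by ring
  rw [h2, abs_neg] at h
  have hden : (1 : ℝ) / 2 ≤ 1 - |x| := by linarith
  have h3 : |x| ^ 3 / (1 - |x|) ≤ 2 * |x| ^ 3 := by
    rw [div_le_iff₀ (by linarith)]
    nlinarith [pow_nonneg (abs_nonneg x) 3]
  have h4 : 2 * |x| ^ 3 ≤ x ^ 2 := by
    nlinarith [_root_.sq_abs x, abs_nonneg x]
  have h5 : |Real.log (1 + x) - x + x ^ 2 / 2| ≤ x ^ 2 := by
    calc |Real.log (1 + x) - x + x ^ 2 / 2|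
        = |(-x + x ^ 2 / 2) + Real.log (1 + x)| := by ring_nf
      _ ≤ |x| ^ 3 / (1 - |x|) := h
      _ ≤ 2 * |x| ^ 3 := h3
      _ ≤ x ^ 2 := h4
  calc |Real.log (1 + x) - x|
      = |(Real.log (1 + x) - x + x ^ 2 / 2) - x ^ 2 / 2| := by ring_nf
    _ ≤ |Real.log (1 + x) - x + x ^ 2 / 2| + |x ^ 2 / 2| := abs_sub _ _
    _ ≤ x ^ 2 + x ^ 2 / 2 := by
        have : |x ^ 2 / 2| = x ^ 2 / 2 := abs_of_nonneg (by positivity)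
        rw [this]
        gcongr
    _ = 3 / 2 * x ^ 2 := by ring

lemma my_exp_ineq {R : ℝ} (hR : 1 ≤ R) :
    2 * R * Real.exp R + 3 / 2 ≤ Real.exp (2 * R) := by
  have h1 : Real.exp 1 * R ≤ Real.exp R := by
    have := Real.add_one_le_exp (R - 1)
    have h2 : Real.exp (R - 1) = Real.exp R / Real.exp 1 := by
      rw [Real.exp_sub]
    rw [h2] at this
    have hepos := Real.exp_pos (1 : ℝ)
    calc Real.exp 1 * R = Real.exp 1 * ((R - 1) + 1) := by ring
      _ ≤ Real.exp 1 * (Real.exp R / Real.exp 1) := by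
          apply mul_le_mul_of_nonneg_left this hepos.le
      _ = Real.exp R := by field_simp
  have h2 : Real.exp (2 * R) = Real.exp R * Real.exp R := by
    rw [two_mul, Real.exp_add]
  have he : (2.7182818283 : ℝ) < Real.exp 1 := Real.exp_one_gt_d9
  have hER : Real.exp 1 ≤ Real.exp R := Real.exp_le_exp.2 hR
  have hEpos : 0 < Real.exp R := Real.exp_pos R
  rw [h2]
  nlinarith [mul_le_mul_of_nonneg_right h1 hEpos.le, mul_pos hEpos hEpos]

theorem cpow_one_add_sub_linear_bound (R : ℝ) (hR : 1 ≤ R) (w : ℂ) (hw : ‖w‖ ≤ R)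
    (x : ℝ) (hx : |x| ≤ 1 / 2) :
    ‖(((1 + x : ℝ) : ℂ) ^ w) - 1 - w * x‖ ≤
      ‖w‖ * x ^ 2 * Real.exp (2 * R) := by
  have hx' : -(1/2 : ℝ) ≤ x ∧ x ≤ 1/2 := abs_le.mp hx
  have h1x : (0 : ℝ) < 1 + x := by linarith [hx'.1]
  set L : ℝ := Real.log (1 + x) with hL
  -- rewrite cpow as exp
  have hcpow : (((1 + x : ℝ) : ℂ)) ^ w = Complex.exp (w * (L : ℂ)) := by
    rw [Complex.cpow_def_of_ne_zero (by exact_mod_cast h1x.ne'), ← Complex.ofReal_log h1x.le,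
      mul_comm]
  set z : ℂ := w * (L : ℂ) with hz
  have hLx : |L - x| ≤ 3 / 2 * x ^ 2 := my_log_one_add_sub_le hx
  have hLle : |L| ≤ 2 * |x| := by
    have h1 : |L| ≤ |L - x| + |x| := by
      calc |L| = |(L - x) + x| := by ring_nf
        _ ≤ |L - x| + |x| := abs_add_le _ _
    have h2 : 3 / 2 * x ^ 2 ≤ |x| := by
      nlinarith [_root_.sq_abs x, abs_nonneg x]
    linarith
  have habsz : ‖z‖ = ‖w‖ * |L| := by
    rw [hz, norm_mul, Complex.norm_real, Real.norm_eq_abs]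
  have hzR : ‖z‖ ≤ R := by
    rw [habsz]
    calc ‖w‖ * |L| ≤ R * (2 * |x|) := by
          apply mul_le_mul hw hLle (abs_nonneg _) (by linarith)
      _ ≤ R * 1 := by
          apply mul_le_mul_of_nonneg_left (by linarith) (by linarith)
      _ = R := mul_one R
  -- decompose
  have hdecomp : (((1 + x : ℝ) : ℂ)) ^ w - 1 - w * x =
      (Complex.exp z - 1 - z) + w * ((L : ℂ) - (x : ℂ)) := by
    rw [hcpow, hz]; ring
  rw [hdecomp]
  have habs : ‖(Complex.exp z - 1 - z) + w * ((L : ℂ) - (x : ℂ))‖ ≤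
      ‖Complex.exp z - 1 - z‖ + ‖w‖ * |L - x| := by
    calc ‖(Complex.exp z - 1 - z) + w * ((L : ℂ) - (x : ℂ))‖
        ≤ ‖Complex.exp z - 1 - z‖ + ‖w * ((L : ℂ) - (x : ℂ))‖ :=
          norm_add_le _ _
      _ = ‖Complex.exp z - 1 - z‖ + ‖w‖ * |L - x| := by
          rw [norm_mul]
          congr 1
          rw [← Complex.ofReal_sub, Complex.norm_real, Real.norm_eq_abs]
  have hterm1 : ‖Complex.exp z - 1 - z‖ ≤
      2 * R * Real.exp R * (‖w‖ * x ^ 2) := by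
    calc ‖Complex.exp z - 1 - z‖
        ≤ ‖z‖ ^ 2 / 2 * Real.exp (‖z‖) :=
          my_abs_exp_sub_one_sub_id_le z
      _ ≤ ‖z‖ ^ 2 / 2 * Real.exp R := by
          gcongr
      _ ≤ (‖w‖ * R * (4 * x ^ 2)) / 2 * Real.exp R := by
          gcongr ?_ / 2 * Real.exp R
          rw [habsz, mul_pow]
          have h1 : |L| ^ 2 ≤ 4 * x ^ 2 := by
            have := hLle
            nlinarith [abs_nonneg L, abs_nonneg x, _root_.sq_abs x, _root_.sq_abs L]
          have h2 : ‖w‖ ^ 2 ≤ ‖w‖ * R := by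
            nlinarith [norm_nonneg w]
          nlinarith [norm_nonneg w, sq_nonneg L, abs_nonneg L,
            mul_le_mul h2 h1 (by positivity) (by positivity)]
      _ = 2 * R * Real.exp R * (‖w‖ * x ^ 2) := by ring
  have hterm2 : ‖w‖ * |L - x| ≤ 3 / 2 * (‖w‖ * x ^ 2) := by
    calc ‖w‖ * |L - x| ≤ ‖w‖ * (3 / 2 * x ^ 2) :=
        mul_le_mul_of_nonneg_left hLx (norm_nonneg _)
      _ = 3 / 2 * (‖w‖ * x ^ 2) := by ring
  have hfin := my_exp_ineq hR
  have hnn : (0 : ℝ) ≤ ‖w‖ * x ^ 2 := by positivity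
  calc ‖(Complex.exp z - 1 - z) + w * ((L : ℂ) - (x : ℂ))‖
      ≤ ‖Complex.exp z - 1 - z‖ + ‖w‖ * |L - x| := habs
    _ ≤ 2 * R * Real.exp R * (‖w‖ * x ^ 2) + 3 / 2 * (‖w‖ * x ^ 2) := by
        linarith
    _ = (2 * R * Real.exp R + 3 / 2) * (‖w‖ * x ^ 2) := by ring
    _ ≤ Real.exp (2 * R) * (‖w‖ * x ^ 2) :=
        mul_le_mul_of_nonneg_right hfin hnn
    _ = ‖w‖ * x ^ 2 * Real.exp (2 * R) := by ring
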